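/- Let C = {(x:y:z) ∈ ℙ²(ℂ) : x·y·z + y³ = 0} be the union of a smooth conic and a transverse line, and let p₁, …, pₙ ∈ C. If the stabilizer subgroup {g ∈ SL(3,ℂ) : g·C = C and g·pᵢ = pᵢ for all i} is infinite, then each pᵢ is one of the two nodal singularities (1:0:0) or (0:0:1). -/

import Mathlib

open Matrix

noncomputable section

/-- The special linear group `SL(3, ℂ)`. -/
abbrev SL3 := Matrix.SpecialLinearGroup (Fin 3) ℂ

/-- The complex projective plane `ℙ²(ℂ)`. -/
abbrev P2 := Projectivization ℂ (Fin 3 → ℂ)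

/-- The action of `SL(3, ℂ)` on `ℙ²(ℂ)` induced by the linear action on `ℂ³`. -/
noncomputable def act (g : SL3) (p : P2) : P2 :=
  Projectivization.map (Matrix.SpecialLinearGroup.toLin' g).toLinearMap
    (Matrix.SpecialLinearGroup.toLin' g).injective p

/-- The union of a smooth conic and a transverse line, `{x·y·z + y³ = 0}`. -/
def Cct : Set P2 := {p : P2 | p.rep 0 * p.rep 1 * p.rep 2 + p.rep 1 ^ 3 = 0}

/-- The nodal point `(1:0:0)`. -/
def node₁ : P2 := Projectivization.mk ℂ ![1, 0, 0] (by
  intro h; simpa using congrFun h 0)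

/-- The nodal point `(0:0:1)`. -/
def node₂ : P2 := Projectivization.mk ℂ ![0, 0, 1] (by
  intro h; simpa using congrFun h 2)

open Polynomial

lemma mem_Cct_iff {v : Fin 3 → ℂ} (hv : v ≠ 0) :
    Projectivization.mk ℂ v hv ∈ Cct ↔ v 0 * v 1 * v 2 + v 1 ^ 3 = 0 := by
  obtain ⟨a, ha⟩ := Projectivization.exists_smul_eq_mk_rep ℂ v hv
  have h0 := congrFun ha 0
  have h1 := congrFun ha 1
  have h2 := congrFun ha 2
  simp only [Pi.smul_apply, Units.smul_def, smul_eq_mul] at h0 h1 h2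
  unfold Cct
  rw [Set.mem_setOf_eq, ← h0, ← h1, ← h2]
  constructor
  · intro h
    have ha0 : (a : ℂ) ≠ 0 := a.ne_zero
    have h' : (a : ℂ) ^ 3 * (v 0 * v 1 * v 2 + v 1 ^ 3) = 0 := by linear_combination h
    exact (mul_eq_zero.mp h').resolve_left (pow_ne_zero _ ha0)
  · intro h
    linear_combination (a : ℂ) ^ 3 * h

lemma mulVec_ne_zero (g : SL3) {v : Fin 3 → ℂ} (hv : v ≠ 0) : g.1.mulVec v ≠ 0 := by
  intro h
  apply hv
  apply (Matrix.SpecialLinearGroup.toLin' g).injective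
  simp [Matrix.SpecialLinearGroup.toLin'_apply, Matrix.toLin'_apply, h]

lemma act_mk (g : SL3) {v : Fin 3 → ℂ} (hv : v ≠ 0) :
    act g (Projectivization.mk ℂ v hv) =
      Projectivization.mk ℂ (g.1.mulVec v) (mulVec_ne_zero g hv) := by
  unfold act
  rw [Projectivization.map_mk]
  apply (Projectivization.mk_eq_mk_iff ℂ _ _ _ _).mpr
  refine ⟨1, ?_⟩
  simp [Matrix.SpecialLinearGroup.toLin'_apply, Matrix.toLin'_apply]

lemma eq_node₁ {v : Fin 3 → ℂ} (hv : v ≠ 0) (h1 : v 1 = 0) (h2 : v 2 = 0) :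
    Projectivization.mk ℂ v hv = node₁ := by
  unfold node₁
  rw [Projectivization.mk_eq_mk_iff']
  refine ⟨v 0, ?_⟩
  funext k
  fin_cases k <;> simp [h1, h2]

lemma eq_node₂ {v : Fin 3 → ℂ} (hv : v ≠ 0) (h0 : v 0 = 0) (h1 : v 1 = 0) :
    Projectivization.mk ℂ v hv = node₂ := by
  unfold node₂
  rw [Projectivization.mk_eq_mk_iff']
  refine ⟨v 2, ?_⟩
  funext k
  fin_cases k <;> simp [h0, h1]

lemma classify (M : Matrix (Fin 3) (Fin 3) ℂ)
    (hdet : M.det = 1)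
    (hline : ∀ z : ℂ, (M 0 0 + M 0 2 * z) * (M 1 0 + M 1 2 * z) * (M 2 0 + M 2 2 * z)
      + (M 1 0 + M 1 2 * z) ^ 3 = 0)
    (hconic : ∀ t : ℂ, (M 0 0 + M 0 1 * t - M 0 2 * t ^ 2) * (M 1 0 + M 1 1 * t - M 1 2 * t ^ 2)
      * (M 2 0 + M 2 1 * t - M 2 2 * t ^ 2) + (M 1 0 + M 1 1 * t - M 1 2 * t ^ 2) ^ 3 = 0) :
    (M 0 1 = 0 ∧ M 0 2 = 0 ∧ M 1 0 = 0 ∧ M 1 2 = 0 ∧ M 2 0 = 0 ∧ M 2 1 = 0 ∧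
      M 0 0 * M 2 2 = M 1 1 ^ 2 ∧ M 1 1 ^ 3 = 1) ∨
    (M 0 0 = 0 ∧ M 0 1 = 0 ∧ M 1 0 = 0 ∧ M 1 2 = 0 ∧ M 2 1 = 0 ∧ M 2 2 = 0 ∧
      M 0 2 * M 2 0 = M 1 1 ^ 2 ∧ M 1 1 ^ 3 = -1) := by
  rw [Matrix.det_fin_three] at hdet
  -- Step 1: middle row is (0, M 1 1, 0)
  have hBP : ((C (M 1 0) + C (M 1 2) * X) *
      ((C (M 0 0) + C (M 0 2) * X) * (C (M 2 0) + C (M 2 2) * X)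
        + (C (M 1 0) + C (M 1 2) * X) ^ 2) : ℂ[X]) = 0 := by
    apply Polynomial.zero_of_eval_zero
    intro x
    simp only [eval_mul, eval_add, eval_pow, eval_C, eval_X]
    linear_combination hline x
  have hrow : M 1 0 = 0 ∧ M 1 2 = 0 := by
    rcases mul_eq_zero.mp hBP with hB | hP
    · have e0 := congrArg (eval 0) hB
      have e1 := congrArg (eval 1) hB
      simp only [eval_add, eval_mul, eval_C, eval_X, eval_zero, mul_zero, add_zero,
        mul_one] at e0 e1
      exact ⟨e0, by linear_combination e1 - e0⟩
    · exfalso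
      have q0 := congrArg (eval 0) hP
      have q1 := congrArg (eval 1) hP
      have qm1 := congrArg (eval (-1)) hP
      simp only [eval_add, eval_mul, eval_pow, eval_C, eval_X, eval_zero, mul_zero, add_zero,
        mul_one, mul_neg_one] at q0 q1 qm1
      have h1 : M 0 0 * M 2 0 + M 1 0 ^ 2 = 0 := by linear_combination q0
      have h2 : M 0 2 * M 2 2 + M 1 2 ^ 2 = 0 := by linear_combination (q1 + qm1) / 2 - q0
      have h3 : M 0 0 * M 2 2 + M 2 0 * M 0 2 + 2 * M 1 0 * M 1 2 = 0 := by
        linear_combination (q1 - qm1) / 2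
      -- cross products of columns 0 and 2 vanish (no isotropic planes)
      have hc1 : (M 1 0 * M 2 2 - M 2 0 * M 1 2) = 0 := by
        rw [← sq_eq_zero_iff]
        linear_combination (M 2 2) ^ 2 * h1 + (M 2 0) ^ 2 * h2 - (M 2 0 * M 2 2) * h3
      have hc2 : (M 0 0 * M 2 2 - M 2 0 * M 0 2) = 0 := by
        rw [← sq_eq_zero_iff]
        linear_combination (M 0 0 * M 2 2 + M 2 0 * M 0 2 - 2 * M 1 0 * M 1 2) * h3
          - 4 * M 0 2 * M 2 2 * h1 + 4 * M 1 0 ^ 2 * h2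
      have hc3 : (M 0 0 * M 1 2 - M 1 0 * M 0 2) = 0 := by
        rw [← sq_eq_zero_iff]
        linear_combination (M 0 2) ^ 2 * h1 + (M 0 0) ^ 2 * h2 - (M 0 0 * M 0 2) * h3
      exact one_ne_zero (α := ℂ) (by
        linear_combination -hdet + M 1 1 * hc2 - M 0 1 * hc1 - M 2 1 * hc3)
  obtain ⟨hm10, hm12⟩ := hrow
  have hm11 : M 1 1 ≠ 0 := by
    intro h
    apply one_ne_zero (α := ℂ)
    linear_combination -hdet + (M 0 0 * M 2 2 - M 0 2 * M 2 0) * h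
      + (M 0 2 * M 2 1 - M 0 1 * M 2 2) * hm10 + (M 0 1 * M 2 0 - M 0 0 * M 2 1) * hm12
  -- Step 2: the conic condition
  simp only [hm10, hm12] at hconic
  have hPQ : ((C (M 0 0) + C (M 0 1) * X - C (M 0 2) * X ^ 2) *
      (C (M 2 0) + C (M 2 1) * X - C (M 2 2) * X ^ 2) + C (M 1 1) ^ 2 * X ^ 2 : ℂ[X]) = 0 := by
    have hfull : ((C (M 1 1) * X) * ((C (M 0 0) + C (M 0 1) * X - C (M 0 2) * X ^ 2) *
        (C (M 2 0) + C (M 2 1) * X - C (M 2 2) * X ^ 2) + C (M 1 1) ^ 2 * X ^ 2) : ℂ[X]) = 0 := by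
      apply Polynomial.zero_of_eval_zero
      intro x
      simp only [eval_mul, eval_add, eval_sub, eval_pow, eval_C, eval_X]
      linear_combination hconic x
    rcases mul_eq_zero.mp hfull with h | h
    · exact absurd h (mul_ne_zero (Polynomial.C_ne_zero.mpr hm11) Polynomial.X_ne_zero)
    · exact h
  have hq : ∀ t : ℂ, (M 0 0 + M 0 1 * t - M 0 2 * t ^ 2) * (M 2 0 + M 2 1 * t - M 2 2 * t ^ 2)
      + M 1 1 ^ 2 * t ^ 2 = 0 := by
    intro t
    have := congrArg (eval t) hPQ
    simp only [eval_mul, eval_add, eval_sub, eval_pow, eval_C, eval_X, eval_zero] at this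
    linear_combination this
  have e0 : M 0 0 * M 2 0 = 0 := by linear_combination hq 0
  have e4 : M 0 2 * M 2 2 = 0 := by
    linear_combination (hq 2 + hq (-2)) / 24 - (hq 1 + hq (-1)) / 6 + hq 0 / 4
  have e1 : M 0 0 * M 2 1 + M 0 1 * M 2 0 = 0 := by
    linear_combination (2 / 3 : ℂ) * (hq 1 - hq (-1)) - (hq 2 - hq (-2)) / 12
  have e3 : M 0 1 * M 2 2 + M 0 2 * M 2 1 = 0 := by
    linear_combination (hq 1 - hq (-1)) / 6 - (hq 2 - hq (-2)) / 12
  have e2 : M 0 1 * M 2 1 - M 0 0 * M 2 2 - M 0 2 * M 2 0 + M 1 1 ^ 2 = 0 := by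
    linear_combination (2 / 3 : ℂ) * (hq 1 + hq (-1)) - (hq 2 + hq (-2)) / 24 - (5 / 4 : ℂ) * hq 0
  rcases mul_eq_zero.mp e0 with h00 | h20
  · -- antidiagonal case
    right
    have h02 : M 0 2 ≠ 0 := by
      intro h
      apply one_ne_zero (α := ℂ)
      linear_combination -hdet + (M 0 0 * M 2 2 - M 0 2 * M 2 0) * hm11
        + (M 0 2 * M 2 1 - M 0 1 * M 2 2) * hm10 + (M 0 1 * M 2 0 - M 0 0 * M 2 1) * hm12
        + M 1 1 * M 2 2 * h00 - M 1 1 * M 2 0 * h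
    have h20' : M 2 0 ≠ 0 := by
      intro h
      apply one_ne_zero (α := ℂ)
      linear_combination -hdet + (M 0 0 * M 2 2 - M 0 2 * M 2 0) * hm11
        + (M 0 2 * M 2 1 - M 0 1 * M 2 2) * hm10 + (M 0 1 * M 2 0 - M 0 0 * M 2 1) * hm12
        + M 1 1 * M 2 2 * h00 - M 1 1 * M 0 2 * h
    have h22 : M 2 2 = 0 := by
      rcases mul_eq_zero.mp e4 with h | h
      · exact absurd h h02
      · exact h
    have h01 : M 0 1 = 0 := by
      have : M 0 1 * M 2 0 = 0 := by linear_combination e1 - M 2 1 * h00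
      exact (mul_eq_zero.mp this).resolve_right h20'
    have h21 : M 2 1 = 0 := by
      have : M 0 2 * M 2 1 = 0 := by linear_combination e3 - M 2 2 * h01
      exact (mul_eq_zero.mp this).resolve_left h02
    have hrel : M 0 2 * M 2 0 = M 1 1 ^ 2 := by
      linear_combination -e2 + M 2 1 * h01 - M 2 2 * h00
    have hb3 : M 1 1 ^ 3 = -1 := by
      linear_combination -hdet - M 1 1 * hrel
        + (M 0 2 * M 2 1 - M 0 1 * M 2 2) * hm10 + (M 0 1 * M 2 0 - M 0 0 * M 2 1) * hm12
        + M 1 1 * M 2 2 * h00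
    exact ⟨h00, h01, hm10, hm12, h21, h22, hrel, hb3⟩
  · -- diagonal case
    left
    have h00' : M 0 0 ≠ 0 := by
      intro h
      apply one_ne_zero (α := ℂ)
      linear_combination -hdet + (M 0 0 * M 2 2 - M 0 2 * M 2 0) * hm11
        + (M 0 2 * M 2 1 - M 0 1 * M 2 2) * hm10 + (M 0 1 * M 2 0 - M 0 0 * M 2 1) * hm12
        + M 1 1 * M 2 2 * h - M 1 1 * M 0 2 * h20
    have h22' : M 2 2 ≠ 0 := by
      intro h
      apply one_ne_zero (α := ℂ)
      linear_combination -hdet + (M 0 0 * M 2 2 - M 0 2 * M 2 0) * hm11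
        + (M 0 2 * M 2 1 - M 0 1 * M 2 2) * hm10 + (M 0 1 * M 2 0 - M 0 0 * M 2 1) * hm12
        + M 1 1 * M 0 0 * h - M 1 1 * M 0 2 * h20
    have h02 : M 0 2 = 0 := (mul_eq_zero.mp e4).resolve_right h22'
    have h21 : M 2 1 = 0 := by
      have : M 0 0 * M 2 1 = 0 := by linear_combination e1 - M 0 1 * h20
      exact (mul_eq_zero.mp this).resolve_left h00'
    have h01 : M 0 1 = 0 := by
      have : M 0 1 * M 2 2 = 0 := by linear_combination e3 - M 2 1 * h02
      exact (mul_eq_zero.mp this).resolve_right h22'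
    have hrel : M 0 0 * M 2 2 = M 1 1 ^ 2 := by
      linear_combination -e2 + M 2 1 * h01 - M 2 0 * h02
    have hb3 : M 1 1 ^ 3 = 1 := by
      linear_combination hdet - M 1 1 * hrel
        + (M 0 1 * M 2 2 - M 0 2 * M 2 1) * hm10 + (M 0 0 * M 2 1 - M 0 1 * M 2 0) * hm12
        + M 0 2 * M 1 1 * h20
    exact ⟨h01, h02, hm10, hm12, h20, h21, hrel, hb3⟩

/-- If marked points on the conic-plus-transverse-line cubic have infinite `SL(3,ℂ)`
stabilizer, every marked point is one of the two nodes `(1:0:0)` or `(0:0:1)`. -/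
theorem conic_transverse_line_stabilizer (n : ℕ) (p : Fin n → P2)
    (hp : ∀ i, p i ∈ Cct)
    (hstab : {g : SL3 | act g '' Cct = Cct ∧ ∀ i, act g (p i) = p i}.Infinite) :
    ∀ i, p i = node₁ ∨ p i = node₂ := by
  intro i
  by_contra hcon
  push_neg at hcon
  obtain ⟨hn1, hn2⟩ := hcon
  obtain ⟨v, hv, hq, hF⟩ : ∃ (v : Fin 3 → ℂ) (hv : v ≠ 0),
      p i = Projectivization.mk ℂ v hv ∧ v 0 * v 1 * v 2 + v 1 ^ 3 = 0 :=
    ⟨(p i).rep, (p i).rep_nonzero, (Projectivization.mk_rep _).symm, hp i⟩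
  have hv0 : v 0 ≠ 0 := by
    intro h0
    have h1 : v 1 = 0 := by
      have h3 : v 1 ^ 3 = 0 := by linear_combination hF - v 1 * v 2 * h0
      exact pow_eq_zero_iff (by norm_num) |>.mp h3
    exact hn2 (hq.trans (eq_node₂ hv h0 h1))
  have hv2 : v 2 ≠ 0 := by
    intro h2
    have h1 : v 1 = 0 := by
      have h3 : v 1 ^ 3 = 0 := by linear_combination hF - v 0 * v 1 * h2
      exact pow_eq_zero_iff (by norm_num) |>.mp h3
    exact hn1 (hq.trans (eq_node₁ hv h1 h2))
  set E : Set ℂ := {x : ℂ | x * (x ^ 6 - 1) * (x ^ 6 - v 0 ^ 6 / v 2 ^ 6)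
    * (x ^ 6 - v 2 ^ 6 / v 0 ^ 6) = 0} with hE
  have hEfin : E.Finite := by
    have hP : (X * (X ^ 6 - C 1) * (X ^ 6 - C (v 0 ^ 6 / v 2 ^ 6))
        * (X ^ 6 - C (v 2 ^ 6 / v 0 ^ 6)) : ℂ[X]) ≠ 0 := by
      apply Polynomial.Monic.ne_zero
      exact (((monic_X.mul (monic_X_pow_sub_C _ (by norm_num))).mul
        (monic_X_pow_sub_C _ (by norm_num))).mul (monic_X_pow_sub_C _ (by norm_num)))
    apply (Polynomial.finite_setOf_isRoot hP).subset
    intro x hx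
    simp only [hE, Set.mem_setOf_eq] at hx ⊢
    show Polynomial.IsRoot _ x
    simp only [Polynomial.IsRoot, eval_mul, eval_sub, eval_pow, eval_C, eval_X]
    linear_combination hx
  have hmemE : ∀ x : ℂ,
      (x = 0 ∨ x ^ 6 = 1 ∨ x ^ 6 = v 0 ^ 6 / v 2 ^ 6 ∨ x ^ 6 = v 2 ^ 6 / v 0 ^ 6) → x ∈ E := by
    intro x hx
    simp only [hE, Set.mem_setOf_eq]
    rcases hx with h | h | h | h
    · linear_combination ((x ^ 6 - 1) * (x ^ 6 - v 0 ^ 6 / v 2 ^ 6)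
        * (x ^ 6 - v 2 ^ 6 / v 0 ^ 6)) * h
    · linear_combination (x * (x ^ 6 - v 0 ^ 6 / v 2 ^ 6) * (x ^ 6 - v 2 ^ 6 / v 0 ^ 6)) * h
    · linear_combination (x * (x ^ 6 - 1) * (x ^ 6 - v 2 ^ 6 / v 0 ^ 6)) * h
    · linear_combination (x * (x ^ 6 - 1) * (x ^ 6 - v 0 ^ 6 / v 2 ^ 6)) * h
  have hTfin : {N : Matrix (Fin 3) (Fin 3) ℂ | ∀ a b, N a b ∈ E}.Finite :=
    Set.Finite.pi' (fun _ => Set.Finite.pi' (fun _ => hEfin))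
  apply hstab
  apply Set.Finite.subset (hTfin.preimage (Subtype.coe_injective.injOn))
  rintro g ⟨hgC, hgfix⟩
  simp only [Set.mem_preimage, Set.mem_setOf_eq]
  intro a b
  -- establish the hypotheses of `classify` for M = g.1
  have hdet : (g.1 : Matrix (Fin 3) (Fin 3) ℂ).det = 1 := g.2
  have hcur : ∀ (u : Fin 3 → ℂ) (hu : u ≠ 0), u 0 * u 1 * u 2 + u 1 ^ 3 = 0 →
      (g.1.mulVec u) 0 * (g.1.mulVec u) 1 * (g.1.mulVec u) 2 + (g.1.mulVec u) 1 ^ 3 = 0 := by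
    intro u hu hFu
    have h1 : Projectivization.mk ℂ u hu ∈ Cct := (mem_Cct_iff hu).mpr hFu
    have h2 : act g (Projectivization.mk ℂ u hu) ∈ Cct := hgC ▸ Set.mem_image_of_mem _ h1
    rw [act_mk g hu] at h2
    exact (mem_Cct_iff _).mp h2
  have hline : ∀ z : ℂ, (g.1 0 0 + g.1 0 2 * z) * (g.1 1 0 + g.1 1 2 * z)
      * (g.1 2 0 + g.1 2 2 * z) + (g.1 1 0 + g.1 1 2 * z) ^ 3 = 0 := by
    intro z
    have hu : (![1, 0, z] : Fin 3 → ℂ) ≠ 0 := fun h => by simpa using congrFun h 0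
    have h := hcur ![1, 0, z] hu (by simp)
    simp only [Matrix.mulVec, dotProduct, Fin.sum_univ_three, Matrix.cons_val_zero,
      Matrix.cons_val_one, Matrix.head_cons, Matrix.cons_val_two, Matrix.tail_cons] at h
    linear_combination h
  have hconic : ∀ t : ℂ, (g.1 0 0 + g.1 0 1 * t - g.1 0 2 * t ^ 2)
      * (g.1 1 0 + g.1 1 1 * t - g.1 1 2 * t ^ 2)
      * (g.1 2 0 + g.1 2 1 * t - g.1 2 2 * t ^ 2)
      + (g.1 1 0 + g.1 1 1 * t - g.1 1 2 * t ^ 2) ^ 3 = 0 := by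
    intro t
    have hu : (![1, t, -t ^ 2] : Fin 3 → ℂ) ≠ 0 := fun h => by simpa using congrFun h 0
    have h := hcur ![1, t, -t ^ 2] hu (by simp; ring)
    simp only [Matrix.mulVec, dotProduct, Fin.sum_univ_three, Matrix.cons_val_zero,
      Matrix.cons_val_one, Matrix.head_cons, Matrix.cons_val_two, Matrix.tail_cons] at h
    linear_combination h
  -- the fixed point equations
  have hfix := hgfix i
  rw [hq, act_mk g hv] at hfix
  obtain ⟨s, hs⟩ := (Projectivization.mk_eq_mk_iff ℂ _ _ _ _).mp hfix
  have hM0 := congrFun hs 0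
  have hM1 := congrFun hs 1
  have hM2 := congrFun hs 2
  simp only [Pi.smul_apply, Units.smul_def, smul_eq_mul, Matrix.mulVec, dotProduct,
    Fin.sum_univ_three] at hM0 hM1 hM2
  -- classify
  rcases classify g.1 hdet hline hconic with
    ⟨h01, h02, h10, h12, h20, h21, hrel, hb3⟩ | ⟨h00, h01, h10, h12, h21, h22, hrel, hb3⟩
  · -- diagonal
    simp only [h01, h02, h20, h21, mul_zero, zero_mul, add_zero, zero_add] at hM0 hM2
    -- hM0 : s * v 0 = g.1 0 0 * v 0 ; hM2 : s * v 2 = g.1 2 2 * v 2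
    have h00a : g.1 0 0 = (s : ℂ) := mul_right_cancel₀ hv0 (by linear_combination -hM0)
    have h22a : g.1 2 2 = (s : ℂ) := mul_right_cancel₀ hv2 (by linear_combination -hM2)
    have ha2 : (s : ℂ) ^ 2 = g.1 1 1 ^ 2 := by
      linear_combination hrel - g.1 2 2 * h00a - (s : ℂ) * h22a
    have hb6 : g.1 1 1 ^ 6 = 1 := by linear_combination (g.1 1 1 ^ 3 + 1) * hb3
    have ha6 : (s : ℂ) ^ 6 = 1 := by
      linear_combination ((s : ℂ) ^ 4 + (s : ℂ) ^ 2 * g.1 1 1 ^ 2 + g.1 1 1 ^ 4) * ha2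
        + (g.1 1 1 ^ 3 + 1) * hb3
    have hA : g.1 0 0 ^ 6 = 1 := by rw [h00a]; exact ha6
    have hC : g.1 2 2 ^ 6 = 1 := by rw [h22a]; exact ha6
    fin_cases a <;> fin_cases b
    · exact hmemE _ (Or.inr (Or.inl hA))
    · exact hmemE _ (Or.inl h01)
    · exact hmemE _ (Or.inl h02)
    · exact hmemE _ (Or.inl h10)
    · exact hmemE _ (Or.inr (Or.inl hb6))
    · exact hmemE _ (Or.inl h12)
    · exact hmemE _ (Or.inl h20)
    · exact hmemE _ (Or.inl h21)
    · exact hmemE _ (Or.inr (Or.inl hC))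
  · -- antidiagonal
    simp only [h00, h01, h21, h22, mul_zero, zero_mul, add_zero, zero_add] at hM0 hM2
    -- hM0 : s * v 0 = g.1 0 2 * v 2 ; hM2 : s * v 2 = g.1 2 0 * v 0
    have ha2 : (s : ℂ) ^ 2 = g.1 1 1 ^ 2 := by
      have hcan : g.1 0 2 * g.1 2 0 * (v 0 * v 2) = (s : ℂ) ^ 2 * (v 0 * v 2) := by
        linear_combination (-(g.1 2 0) * v 0) * hM0 - ((s : ℂ) * v 0) * hM2
      have hss := mul_right_cancel₀ (mul_ne_zero hv0 hv2) hcan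
      linear_combination -hss + hrel
    have hb6 : g.1 1 1 ^ 6 = 1 := by linear_combination (g.1 1 1 ^ 3 - 1) * hb3
    have ha6 : (s : ℂ) ^ 6 = 1 := by
      linear_combination ((s : ℂ) ^ 4 + (s : ℂ) ^ 2 * g.1 1 1 ^ 2 + g.1 1 1 ^ 4) * ha2
        + (g.1 1 1 ^ 3 - 1) * hb3
    have hA6 : g.1 0 2 ^ 6 = v 0 ^ 6 / v 2 ^ 6 := by
      rw [eq_div_iff (pow_ne_zero 6 hv2)]
      have h6 : ((s : ℂ) * v 0) ^ 6 = (g.1 0 2 * v 2) ^ 6 := by rw [hM0]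
      linear_combination -h6 + v 0 ^ 6 * ha6
    have hC6 : g.1 2 0 ^ 6 = v 2 ^ 6 / v 0 ^ 6 := by
      rw [eq_div_iff (pow_ne_zero 6 hv0)]
      have h6 : ((s : ℂ) * v 2) ^ 6 = (g.1 2 0 * v 0) ^ 6 := by rw [hM2]
      linear_combination -h6 + v 2 ^ 6 * ha6
    fin_cases a <;> fin_cases b
    · exact hmemE _ (Or.inl h00)
    · exact hmemE _ (Or.inl h01)
    · exact hmemE _ (Or.inr (Or.inr (Or.inl hA6)))
    · exact hmemE _ (Or.inl h10)
    · exact hmemE _ (Or.inr (Or.inl hb6))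
    · exact hmemE _ (Or.inl h12)
    · exact hmemE _ (Or.inr (Or.inr (Or.inr hC6)))
    · exact hmemE _ (Or.inl h21)
    · exact hmemE _ (Or.inl h22)
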